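/- Let P and Q be Borel probability measures on Ω. Then Q ≼ P if and only if for every continuous monotone function f : Ω → [0,1] (i.e. f continuous with f(ω) ≤ f(ω') whenever ω ≤ ω') one has ∫ f dQ ≤ ∫ f dP. -/

import Mathlib

set_option linter.unusedSectionVars false
set_option maxHeartbeats 1000000

open MeasureTheory Finset

noncomputable section StrassenAux


open Finset

variable {α : Type*} [Fintype α] [PartialOrder α] [DecidableEq α]

theorem finStrassen (q p : α → ℝ) (hq : ∀ a, 0 ≤ q a) (hp : ∀ a, 0 ≤ p a)
    (hmono : ∀ g : α → ℝ, Monotone g → ∑ a, q a * g a ≤ ∑ a, p a * g a) :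
    ∃ r : α × α → ℝ, (∀ x, 0 ≤ r x) ∧ (∀ x : α × α, ¬ x.1 ≤ x.2 → r x = 0) ∧
      (∀ a, ∑ b, r (a, b) = q a) ∧ (∀ b, ∑ a, r (a, b) = p b) := by
  classical
  set K : Set ((α × α) → ℝ) :=
    {r | (∀ x, 0 ≤ r x) ∧ (∀ x : α × α, ¬ x.1 ≤ x.2 → r x = 0) ∧ ∀ b, ∑ a, r (a, b) = p b}
    with hK
  set m1 : ((α × α) → ℝ) → (α → ℝ) := fun r a => ∑ b, r (a, b) with hm1
  have m1cont : Continuous m1 :=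
    continuous_pi fun a => continuous_finset_sum _ fun b _ => continuous_apply _
  have hKconv : Convex ℝ K := by
    intro r hr s hs θ η hθ hη hθη
    refine ⟨fun x => by
      simp only [Pi.add_apply, Pi.smul_apply, smul_eq_mul]
      have := hr.1 x; have := hs.1 x; positivity, fun x hx => by
      simp only [Pi.add_apply, Pi.smul_apply, smul_eq_mul, hr.2.1 x hx, hs.2.1 x hx,
        mul_zero, add_zero], fun b => ?_⟩
    simp only [Pi.add_apply, Pi.smul_apply, smul_eq_mul]
    rw [Finset.sum_add_distrib, ← Finset.mul_sum, ← Finset.mul_sum, hr.2.2 b, hs.2.2 b,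
      ← add_mul, hθη, one_mul]
  have hKcl : IsClosed K := by
    have hKeq : K = (⋂ x, {r : (α × α) → ℝ | 0 ≤ r x}) ∩
        ((⋂ x ∈ {x : α × α | ¬ x.1 ≤ x.2}, {r : (α × α) → ℝ | r x = 0}) ∩
          (⋂ b, {r : (α × α) → ℝ | ∑ a, r (a, b) = p b})) := by
      ext r
      simp only [hK, Set.mem_inter_iff, Set.mem_iInter, Set.mem_setOf_eq]
    rw [hKeq]
    refine (isClosed_iInter fun x => isClosed_le continuous_const (continuous_apply x)).inter
      ((isClosed_biInter fun x _ => isClosed_eq (continuous_apply x) continuous_const).inter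
        (isClosed_iInter fun b => isClosed_eq
          (continuous_finset_sum _ fun a _ => continuous_apply _) continuous_const))
  have hKsub : K ⊆ Metric.closedBall 0 (∑ b, p b) := by
    intro r hr
    rw [Metric.mem_closedBall, dist_zero_right]
    refine (pi_norm_le_iff_of_nonneg (Finset.sum_nonneg fun b _ => hp b)).2 fun x => ?_
    rw [Real.norm_eq_abs, abs_of_nonneg (hr.1 x)]
    calc r x ≤ ∑ a, r (a, x.2) :=
          Finset.single_le_sum (fun a _ => hr.1 (a, x.2)) (Finset.mem_univ x.1)
      _ = p x.2 := hr.2.2 x.2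
      _ ≤ ∑ b, p b := Finset.single_le_sum (fun b _ => hp b) (Finset.mem_univ x.2)
  have hKcomp : IsCompact K :=
    (isCompact_closedBall _ _).of_isClosed_subset hKcl hKsub
  set C : Set (α → ℝ) := m1 '' K with hC
  have hCcomp : IsCompact C := hKcomp.image m1cont
  have hCconv : Convex ℝ C := by
    rintro _ ⟨r, hr, rfl⟩ _ ⟨s, hs, rfl⟩ θ η hθ hη hθη
    refine ⟨θ • r + η • s, hKconv hr hs hθ hη hθη, ?_⟩
    funext a
    simp only [hm1, Pi.add_apply, Pi.smul_apply, smul_eq_mul]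
    rw [Finset.sum_add_distrib, ← Finset.mul_sum, ← Finset.mul_sum]
  -- key claim: q ∈ C
  have hqC : q ∈ C := by
    by_contra hqC
    obtain ⟨φ, u, hCu, huq⟩ := geometric_hahn_banach_closed_point hCconv hCcomp.isClosed hqC
    set F : α → ℝ := fun a => φ (fun j => if a = j then 1 else 0) with hF
    have hφ : ∀ v : α → ℝ, φ v = ∑ a, v a * F a := by
      intro v
      conv_lhs => rw [pi_eq_sum_univ v]
      rw [map_sum]
      exact Finset.sum_congr rfl fun a _ => by rw [_root_.map_smul]; simp [hF, smul_eq_mul]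
    -- Fstar
    have hne : ∀ b : α, ((univ.filter (· ≤ b)).image F).Nonempty :=
      fun b => ⟨F b, Finset.mem_image.2 ⟨b, by simp, rfl⟩⟩
    set Fs : α → ℝ := fun b => ((univ.filter (· ≤ b)).image F).max' (hne b) with hFs
    have hFle : ∀ b, F b ≤ Fs b := fun b =>
      Finset.le_max' _ _ (Finset.mem_image.2 ⟨b, by simp, rfl⟩)
    have hFsmono : Monotone Fs := by
      intro b b' hbb'
      refine Finset.max'_le _ _ _ fun y hy => ?_
      obtain ⟨a, ha, rfl⟩ := Finset.mem_image.1 hy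
      refine Finset.le_max' _ _ (Finset.mem_image.2 ⟨a, ?_, rfl⟩)
      simp only [Finset.mem_filter, Finset.mem_univ, true_and] at ha ⊢
      exact ha.trans hbb'
    -- selection
    have hsel : ∀ b : α, ∃ a, a ≤ b ∧ F a = Fs b := by
      intro b
      obtain ⟨a, ha, hFa⟩ := Finset.mem_image.1 (Finset.max'_mem _ (hne b))
      exact ⟨a, by simpa using ha, hFa⟩
    choose sel hsel1 hsel2 using hsel
    set r0 : (α × α) → ℝ := fun x => if x.1 = sel x.2 then p x.2 else 0 with hr0
    have hr0K : r0 ∈ K := by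
      refine ⟨fun x => ?_, fun x hx => ?_, fun b => ?_⟩
      · by_cases h : x.1 = sel x.2 <;> simp [hr0, h, hp]
      · have h : ¬ x.1 = sel x.2 := fun h => hx (h ▸ hsel1 x.2)
        simp [hr0, h]
      · simp [hr0, Finset.sum_ite_eq']
    have hm1r0 : ∑ a, (m1 r0) a * F a = ∑ b, p b * Fs b := by
      simp only [hm1, Finset.sum_mul]
      rw [Finset.sum_comm]
      refine Finset.sum_congr rfl fun b _ => ?_
      have hterm : ∀ a, r0 (a, b) * F a = if a = sel b then p b * F (sel b) else 0 := by
        intro a; by_cases h : a = sel b <;> simp [hr0, h]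
      rw [Finset.sum_congr rfl fun a _ => hterm a, Finset.sum_ite_eq' univ (sel b)
        (fun _ => p b * F (sel b))]
      simp [hsel2 b]
    have h1 : φ q ≤ φ (m1 r0) := by
      rw [hφ q, hφ (m1 r0), hm1r0]
      calc ∑ a, q a * F a ≤ ∑ a, q a * Fs a :=
            Finset.sum_le_sum fun a _ => mul_le_mul_of_nonneg_left (hFle a) (hq a)
        _ ≤ ∑ a, p a * Fs a := hmono Fs hFsmono
    exact absurd (h1.trans_lt (hCu _ ⟨r0, hr0K, rfl⟩)) (not_lt.2 huq.le)
  obtain ⟨r, hrK, hrq⟩ := hqC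
  exact ⟨r, hrK.1, hrK.2.1, fun a => congrFun hrq a, hrK.2.2⟩


open MeasureTheory Finset

variable {δ : Type*} [Fintype δ] [DecidableEq δ] [MeasurableSpace δ]
  [MeasurableSingletonClass δ]

/-- cylinder set -/
def cyl (n : ℕ) (a : Fin n → δ) : Set (ℕ → δ) := {z | ∀ i : Fin n, z (i : ℕ) = a i}

lemma cyl_eq (n : ℕ) (a : Fin n → δ) :
    cyl n a = ⋂ i : Fin n, (fun z : ℕ → δ => z (i : ℕ)) ⁻¹' {a i} := by
  ext z; simp [cyl]

lemma measurableSet_cyl (n : ℕ) (a : Fin n → δ) : MeasurableSet (cyl n a) := by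
  rw [cyl_eq]
  exact MeasurableSet.iInter fun i => (measurable_pi_apply _) (measurableSet_singleton _)

/-- restriction map -/
def res {n m : ℕ} (h : n ≤ m) (b : Fin m → δ) : Fin n → δ := fun i => b (Fin.castLE h i)

lemma cyl_subset_of_res {n m : ℕ} (h : n ≤ m) (b : Fin m → δ) :
    cyl m b ⊆ cyl n (res h b) := by
  intro z hz i
  exact hz (Fin.castLE h i)

lemma cyl_eq_biUnion {n m : ℕ} (h : n ≤ m) (a : Fin n → δ) :
    cyl n a = ⋃ b ∈ univ.filter (fun b : Fin m → δ => res h b = a), cyl m b := by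
  ext z
  simp only [Set.mem_iUnion, Finset.mem_filter, Finset.mem_univ, true_and, exists_prop]
  constructor
  · intro hz
    refine ⟨fun i => z (i : ℕ), ?_, fun i => rfl⟩
    funext i
    exact hz i
  · rintro ⟨b, rfl, hz⟩
    exact fun i => hz (Fin.castLE h i)

lemma cyl_disjoint {n : ℕ} {a b : Fin n → δ} (h : a ≠ b) : Disjoint (cyl n a) (cyl n b) := by
  rw [Set.disjoint_left]
  intro z hza hzb
  exact h (funext fun i => (hza i).symm.trans (hzb i))

lemma measure_cyl_sum (μ : Measure (ℕ → δ)) {n m : ℕ} (h : n ≤ m) (a : Fin n → δ) :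
    μ (cyl n a) = ∑ b ∈ univ.filter (fun b : Fin m → δ => res h b = a), μ (cyl m b) := by
  rw [cyl_eq_biUnion h a, measure_biUnion_finset]
  · intro b hb c hc hbc
    exact cyl_disjoint hbc
  · exact fun b _ => measurableSet_cyl m b

lemma sum_measure_cyl (μ : Measure (ℕ → δ)) [IsProbabilityMeasure μ] (n : ℕ) :
    ∑ b : Fin n → δ, μ (cyl n b) = 1 := by
  have h0 : (cyl 0 (fun i => i.elim0) : Set (ℕ → δ)) = Set.univ := by
    ext z; simp [cyl]
  have := measure_cyl_sum μ (Nat.zero_le n) (fun i : Fin 0 => i.elim0)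
  rw [h0, measure_univ] at this
  have hfil : univ.filter (fun b : Fin n → δ =>
      res (Nat.zero_le n) b = fun i : Fin 0 => i.elim0) = univ :=
    Finset.filter_true_of_mem fun b _ => Subsingleton.elim _ _
  rw [hfil] at this
  exact this.symm

lemma generateFrom_cyl :
    (MeasurableSpace.pi : MeasurableSpace (ℕ → δ)) =
      MeasurableSpace.generateFrom {s | ∃ (n : ℕ) (a : Fin n → δ), s = cyl n a} := by
  refine le_antisymm ?_ (MeasurableSpace.generateFrom_le ?_)
  · refine iSup_le fun i => ?_
    have hm : @Measurable (ℕ → δ) δ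
        (MeasurableSpace.generateFrom {s | ∃ (n : ℕ) (a : Fin n → δ), s = cyl n a}) _
        (fun z => z i) := by
      refine @measurable_to_countable' δ (ℕ → δ) _ _
        (MeasurableSpace.generateFrom {s | ∃ (n : ℕ) (a : Fin n → δ), s = cyl n a})
        (fun z => z i) fun y => ?_
      have hset : ((fun z : ℕ → δ => z i) ⁻¹' {y}) =
          ⋃ a ∈ univ.filter (fun a : Fin (i + 1) → δ => a (Fin.last i) = y),
            cyl (i + 1) a := by
        ext z
        simp only [Set.mem_preimage, Set.mem_singleton_iff, Set.mem_iUnion,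
          Finset.mem_filter, Finset.mem_univ, true_and, exists_prop]
        constructor
        · intro hz
          exact ⟨fun j => z (j : ℕ), by simpa using hz, fun j => rfl⟩
        · rintro ⟨a, hay, hz⟩
          have := hz (Fin.last i)
          simp only [Fin.val_last] at this
          rw [this, hay]
      rw [hset]
      exact MeasurableSet.biUnion (Finset.countable_toSet _)
        fun a _ => MeasurableSpace.measurableSet_generateFrom ⟨i + 1, a, rfl⟩
    exact measurable_iff_comap_le.mp hm
  · rintro s ⟨n, a, rfl⟩
    exact measurableSet_cyl n a

lemma measure_ext_cyl (μ ν : Measure (ℕ → δ)) [IsProbabilityMeasure μ] [IsProbabilityMeasure ν]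
    (h : ∀ n (a : Fin n → δ), μ (cyl n a) = ν (cyl n a)) : μ = ν := by
  refine ext_of_generate_finite _ generateFrom_cyl ?_ ?_ (by simp)
  · rintro s ⟨n, a, rfl⟩ t ⟨m, b, rfl⟩ hst
    rcases le_total n m with hnm | hmn
    · obtain ⟨z, hza, hzb⟩ := hst
      have hab : res hnm b = a := funext fun i => (hzb (Fin.castLE hnm i)).symm.trans (hza i)
      have : cyl n a ∩ cyl m b = cyl m b :=
        Set.inter_eq_self_of_subset_right (hab ▸ cyl_subset_of_res hnm b)
      rw [this]; exact ⟨m, b, rfl⟩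
    · obtain ⟨z, hza, hzb⟩ := hst
      have hab : res hmn a = b := funext fun i => (hza (Fin.castLE hmn i)).symm.trans (hzb i)
      have : cyl n a ∩ cyl m b = cyl n a :=
        Set.inter_eq_self_of_subset_left (hab ▸ cyl_subset_of_res hmn a)
      rw [this]; exact ⟨n, a, rfl⟩
  · rintro s ⟨n, a, rfl⟩
    exact h n a

open Finset

section coding
variable {γ : Type*} [Fintype γ] [DecidableEq γ] [Nonempty γ]

/-- rank of an element in an arbitrary enumeration -/
noncomputable def rankγ (c : γ) : ℕ := (Fintype.equivFin γ c : ℕ)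

lemma rankγ_lt_card (c : γ) : rankγ c < Fintype.card γ := (Fintype.equivFin γ c).isLt

lemma rankγ_inj {c c' : γ} (h : rankγ c = rankγ c') : c = c' :=
  (Fintype.equivFin γ).injective (Fin.ext h)

/-- elements strictly below `c` in the enumeration -/
noncomputable def below (c : γ) : Finset γ := Finset.univ.filter (fun c'' => rankγ c'' < rankγ c)

lemma not_mem_below_self (c : γ) : c ∉ below c := by simp [below]

lemma below_insert {c c'' : γ} (h : rankγ c'' = rankγ c + 1) :
    below c'' = insert c (below c) := by
  ext d
  simp only [below, Finset.mem_filter, Finset.mem_univ, true_and, Finset.mem_insert, h]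
  constructor
  · intro hd
    rcases Nat.lt_succ_iff_lt_or_eq.1 hd with h' | h'
    · exact Or.inr h'
    · exact Or.inl (rankγ_inj h')
  · rintro (rfl | hd) <;> omega

lemma exists_rank_succ {c : γ} (h : ∃ d : γ, rankγ c < rankγ d) :
    ∃ c'' : γ, rankγ c'' = rankγ c + 1 := by
  obtain ⟨d, hd⟩ := h
  refine ⟨(Fintype.equivFin γ).symm ⟨rankγ c + 1, lt_of_le_of_lt hd (rankγ_lt_card d)⟩, ?_⟩
  simp [rankγ]

lemma univ_eq_insert_below {c : γ} (h : ∀ d : γ, rankγ d ≤ rankγ c) :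
    (Finset.univ : Finset γ) = insert c (below c) := by
  ext d
  simp only [Finset.mem_univ, true_iff, Finset.mem_insert, below, Finset.mem_filter, true_and]
  rcases eq_or_ne d c with rfl | hd
  · exact Or.inl rfl
  · exact Or.inr (lt_of_le_of_ne (h d) fun he => hd (rankγ_inj he))

lemma split (w : γ → ℝ) (hw : ∀ c, 0 ≤ w c) (t x : ℝ) (h1 : t ≤ x)
    (h2 : x < t + ∑ c, w c) :
    ∃! c' : γ, (t + ∑ c'' ∈ below c', w c'' ≤ x) ∧
      x < t + ∑ c'' ∈ below c', w c'' + w c' := by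
  classical
  set S : Finset γ := Finset.univ.filter (fun c' => t + ∑ c'' ∈ below c', w c'' ≤ x) with hS
  have hc0 : ((Fintype.equivFin γ).symm ⟨0, Fintype.card_pos⟩ : γ) ∈ S := by
    have : below ((Fintype.equivFin γ).symm ⟨0, Fintype.card_pos⟩ : γ) = ∅ := by
      refine Finset.filter_false_of_mem fun d _ => ?_
      simp [rankγ]
    rw [hS, Finset.mem_filter, this, Finset.sum_empty, add_zero]
    exact ⟨Finset.mem_univ _, h1⟩
  obtain ⟨c', hc'S, hmax⟩ := Finset.exists_max_image S rankγ ⟨_, hc0⟩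
  simp only [hS, Finset.mem_filter, Finset.mem_univ, true_and] at hc'S
  have hub : x < t + ∑ c'' ∈ below c', w c'' + w c' := by
    by_contra hx
    push_neg at hx
    by_cases hcc : ∃ d : γ, rankγ c' < rankγ d
    · obtain ⟨c'', hc''⟩ := exists_rank_succ hcc
      have hbel : below c'' = insert c' (below c') := below_insert hc''
      have hsum : ∑ d ∈ below c'', w d = ∑ d ∈ below c', w d + w c' := by
        rw [hbel, Finset.sum_insert (not_mem_below_self c')]; ring
      have hc''S : c'' ∈ S := by
        simp only [hS, Finset.mem_filter, Finset.mem_univ, true_and, hsum]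
        linarith
      have := hmax c'' hc''S
      omega
    · push_neg at hcc
      have huniv := univ_eq_insert_below hcc
      have : ∑ c, w c = ∑ d ∈ below c', w d + w c' := by
        rw [huniv, Finset.sum_insert (not_mem_below_self c')]; ring
      linarith
  refine ⟨c', ⟨hc'S, hub⟩, ?_⟩
  rintro c₁ ⟨hc₁, hc₁'⟩
  rcases lt_trichotomy (rankγ c₁) (rankγ c') with hlt | heq | hgt
  · exfalso
    have hsub : insert c₁ (below c₁) ⊆ below c' := by
      intro d hd
      simp only [Finset.mem_insert, below, Finset.mem_filter, Finset.mem_univ, true_and] at hd ⊢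
      rcases hd with rfl | hd <;> omega
    have h5 : ∑ d ∈ insert c₁ (below c₁), w d ≤ ∑ d ∈ below c', w d :=
      Finset.sum_le_sum_of_subset_of_nonneg hsub fun d _ _ => hw d
    rw [Finset.sum_insert (not_mem_below_self c₁)] at h5
    linarith
  · exact rankγ_inj heq
  · exfalso
    have hsub : insert c' (below c') ⊆ below c₁ := by
      intro d hd
      simp only [Finset.mem_insert, below, Finset.mem_filter, Finset.mem_univ, true_and] at hd ⊢
      rcases hd with rfl | hd <;> omega
    have h5 : ∑ d ∈ insert c' (below c'), w d ≤ ∑ d ∈ below c₁, w d :=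
      Finset.sum_le_sum_of_subset_of_nonneg hsub fun d _ _ => hw d
    rw [Finset.sum_insert (not_mem_below_self c')] at h5
    linarith


open Finset MeasureTheory


variable (p : ∀ n, (Fin n → γ) → ℝ)

/-- left endpoints of the coding intervals -/
noncomputable def lo : ∀ n, (Fin n → γ) → ℝ
  | 0, _ => 0
  | (n + 1), c => lo n (Fin.init c) +
      ∑ c' ∈ below (c (Fin.last n)), p (n + 1) (Fin.snoc (Fin.init c) c')

lemma lo_snoc (n : ℕ) (c : Fin n → γ) (c' : γ) :
    lo p (n + 1) (Fin.snoc c c') = lo p n c +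
      ∑ c'' ∈ below c', p (n + 1) (Fin.snoc c c'') := by
  simp [lo, Fin.init_snoc, Fin.snoc_last]

variable (hp0 : ∀ n c, 0 ≤ p n c) (hp1 : ∀ c : Fin 0 → γ, p 0 c = 1)
  (hp2 : ∀ n (c : Fin n → γ), p n c = ∑ c' : γ, p (n + 1) (Fin.snoc c c'))

include hp0 hp2 in
/-- a child's cell is contained in the parent's cell -/
lemma cell_subset (n : ℕ) (c : Fin n → γ) (c' : γ) :
    lo p n c ≤ lo p (n + 1) (Fin.snoc c c') ∧
      lo p (n + 1) (Fin.snoc c c') + p (n + 1) (Fin.snoc c c') ≤ lo p n c + p n c := by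
  constructor
  · rw [lo_snoc]
    have : 0 ≤ ∑ c'' ∈ below c', p (n + 1) (Fin.snoc c c'') :=
      Finset.sum_nonneg fun c'' _ => hp0 _ _
    linarith
  · rw [lo_snoc]
    have h5 : ∑ d ∈ insert c' (below c'), p (n + 1) (Fin.snoc c d) ≤
        ∑ d : γ, p (n + 1) (Fin.snoc c d) :=
      Finset.sum_le_sum_of_subset_of_nonneg (Finset.subset_univ _) fun d _ _ => hp0 _ _
    rw [Finset.sum_insert (by simp [below])] at h5
    have := hp2 n c
    linarith

include hp0 hp1 hp2 in
lemma cell_exu (n : ℕ) : ∀ x : ℝ, 0 ≤ x → x < 1 →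
    ∃! c : Fin n → γ, lo p n c ≤ x ∧ x < lo p n c + p n c := by
  induction n with
  | zero =>
    intro x hx0 hx1
    refine ⟨fun i => i.elim0, ⟨by simpa [lo] using hx0, by simp [lo, hp1 _, hx1]⟩, fun c _ => ?_⟩
    exact Subsingleton.elim _ _
  | succ n ih =>
    intro x hx0 hx1
    obtain ⟨c, ⟨hc1, hc2⟩, hcu⟩ := ih x hx0 hx1
    have htot : x < lo p n c + ∑ c' : γ, p (n + 1) (Fin.snoc c c') := by
      rw [← hp2 n c]; exact hc2
    obtain ⟨c', ⟨hc'1, hc'2⟩, hc'u⟩ :=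
      split (fun c' => p (n + 1) (Fin.snoc c c')) (fun c' => hp0 _ _) (lo p n c) x hc1 htot
    refine ⟨Fin.snoc c c', ⟨?_, ?_⟩, ?_⟩
    · rw [lo_snoc]; exact hc'1
    · rw [lo_snoc]; exact hc'2
    · rintro d ⟨hd1, hd2⟩
      have hd' : d = Fin.snoc (Fin.init d) (d (Fin.last n)) := (Fin.snoc_init_self d).symm
      have hsub := cell_subset p hp0 hp2 n (Fin.init d) (d (Fin.last n))
      rw [← hd'] at hsub
      have hparent : Fin.init d = c :=
        hcu (Fin.init d) ⟨le_trans hsub.1 hd1, lt_of_lt_of_le hd2 hsub.2⟩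
      have : d (Fin.last n) = c' := by
        refine hc'u (d (Fin.last n)) ⟨?_, ?_⟩
        · rw [← hparent, ← lo_snoc, ← hd']; exact hd1
        · rw [← hparent, ← lo_snoc, ← hd']; exact hd2
      rw [hd', hparent, this]

include hp0 hp1 hp2 in
lemma cell_in_unit (n : ℕ) (c : Fin n → γ) :
    0 ≤ lo p n c ∧ lo p n c + p n c ≤ 1 := by
  induction n with
  | zero => exact ⟨le_refl _, by simp [lo, hp1]⟩
  | succ n ih =>
    have hd : c = Fin.snoc (Fin.init c) (c (Fin.last n)) := (Fin.snoc_init_self c).symm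
    have hsub := cell_subset p hp0 hp2 n (Fin.init c) (c (Fin.last n))
    rw [← hd] at hsub
    have := ih (Fin.init c)
    exact ⟨le_trans this.1 hsub.1, le_trans hsub.2 this.2⟩

/-- the digit function: level-`n` cell containing `x` -/
noncomputable def dig (n : ℕ) (x : ℝ) : Fin n → γ :=
  if h : 0 ≤ x ∧ x < 1 then
    (cell_exu p hp0 hp1 hp2 n x h.1 h.2).exists.choose
  else Classical.arbitrary _

lemma dig_spec {n : ℕ} {x : ℝ} (hx0 : 0 ≤ x) (hx1 : x < 1) :
    lo p n (dig p hp0 hp1 hp2 n x) ≤ x ∧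
      x < lo p n (dig p hp0 hp1 hp2 n x) + p n (dig p hp0 hp1 hp2 n x) := by
  rw [dig, dif_pos ⟨hx0, hx1⟩]
  exact (cell_exu p hp0 hp1 hp2 n x hx0 hx1).exists.choose_spec

lemma dig_eq_iff {n : ℕ} {x : ℝ} (hx0 : 0 ≤ x) (hx1 : x < 1) (c : Fin n → γ) :
    dig p hp0 hp1 hp2 n x = c ↔ lo p n c ≤ x ∧ x < lo p n c + p n c := by
  constructor
  · rintro rfl; exact dig_spec p hp0 hp1 hp2 hx0 hx1
  · intro hc
    obtain ⟨d, hd, hu⟩ := cell_exu p hp0 hp1 hp2 n x hx0 hx1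
    rw [hu _ (dig_spec p hp0 hp1 hp2 hx0 hx1), hu _ hc]

lemma dig_init {n : ℕ} {x : ℝ} (hx0 : 0 ≤ x) (hx1 : x < 1) :
    Fin.init (dig p hp0 hp1 hp2 (n + 1) x) = dig p hp0 hp1 hp2 n x := by
  set d := dig p hp0 hp1 hp2 (n + 1) x with hd
  have hspec := dig_spec p hp0 hp1 hp2 (n := n + 1) hx0 hx1
  have hd' : d = Fin.snoc (Fin.init d) (d (Fin.last n)) := (Fin.snoc_init_self d).symm
  have hsub := cell_subset p hp0 hp2 n (Fin.init d) (d (Fin.last n))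
  rw [← hd'] at hsub
  exact ((dig_eq_iff p hp0 hp1 hp2 hx0 hx1 _).2
    ⟨le_trans hsub.1 hspec.1, lt_of_lt_of_le hspec.2 hsub.2⟩).symm

/-- the coding map -/
noncomputable def codeT (x : ℝ) : ℕ → γ :=
  fun k => dig p hp0 hp1 hp2 (k + 1) x (Fin.last k)

lemma codeT_trunc {x : ℝ} (hx0 : 0 ≤ x) (hx1 : x < 1) (n : ℕ) :
    (fun i : Fin n => codeT p hp0 hp1 hp2 x (i : ℕ)) = dig p hp0 hp1 hp2 n x := by
  induction n with
  | zero => exact Subsingleton.elim _ _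
  | succ n ih =>
    funext i
    refine Fin.lastCases ?_ (fun j => ?_) i
    · rfl
    · have h1 : ((Fin.castSucc j : Fin (n + 1)) : ℕ) = (j : ℕ) := rfl
      rw [h1]
      have h2 := congrFun ih j
      rw [h2, ← dig_init p hp0 hp1 hp2 hx0 hx1]
      rfl

end coding

section codemeasure
variable {γ : Type*} [Fintype γ] [DecidableEq γ] [Nonempty γ]
  [MeasurableSpace γ] [MeasurableSingletonClass γ]
  (p : ∀ n, (Fin n → γ) → ℝ)
  (hp0 : ∀ n c, 0 ≤ p n c) (hp1 : ∀ c : Fin 0 → γ, p 0 c = 1)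
  (hp2 : ∀ n (c : Fin n → γ), p n c = ∑ c' : γ, p (n + 1) (Fin.snoc c c'))


include hp0 hp1 hp2 in
lemma measurable_dig (n : ℕ) : Measurable (dig p hp0 hp1 hp2 n) := by
  refine measurable_to_countable' fun c => ?_
  by_cases hc : (Classical.arbitrary (Fin n → γ)) = c
  · have hset : dig p hp0 hp1 hp2 n ⁻¹' {c} =
        Set.Ico (lo p n c) (lo p n c + p n c) ∪ (Set.Ico (0:ℝ) 1)ᶜ := by
      ext x
      simp only [Set.mem_preimage, Set.mem_singleton_iff, Set.mem_union, Set.mem_Ico,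
        Set.mem_compl_iff, not_and, not_lt]
      by_cases hx : 0 ≤ x ∧ x < 1
      · rw [dig_eq_iff p hp0 hp1 hp2 hx.1 hx.2]
        constructor
        · intro h; exact Or.inl h
        · rintro (h | h)
          · exact h
          · exact absurd (h hx.1) (not_le.2 hx.2)
      · constructor
        · intro _; right; intro h0; by_contra h1; exact hx ⟨h0, lt_of_not_ge h1⟩
        · intro _
          rw [dig, dif_neg hx]
          exact hc
    rw [hset]
    exact measurableSet_Ico.union (measurableSet_Ico.compl)
  · have hset : dig p hp0 hp1 hp2 n ⁻¹' {c} = Set.Ico (lo p n c) (lo p n c + p n c) := by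
      ext x
      simp only [Set.mem_preimage, Set.mem_singleton_iff, Set.mem_Ico]
      by_cases hx : 0 ≤ x ∧ x < 1
      · rw [dig_eq_iff p hp0 hp1 hp2 hx.1 hx.2]
      · rw [dig, dif_neg hx]
        constructor
        · intro h; exact absurd h hc
        · intro h
          exfalso
          have hcell := cell_in_unit p hp0 hp1 hp2 n c
          exact hx ⟨le_trans hcell.1 h.1, lt_of_lt_of_le h.2 hcell.2⟩
    rw [hset]
    exact measurableSet_Ico

include hp0 hp1 hp2 in
lemma measurable_codeT : Measurable (codeT p hp0 hp1 hp2) :=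
  measurable_pi_lambda _ fun k =>
    (measurable_pi_apply (Fin.last k)).comp (measurable_dig p hp0 hp1 hp2 (k + 1))

include hp0 hp1 hp2 in
theorem exists_coding_measure :
    ∃ μ : Measure (ℕ → γ), IsProbabilityMeasure μ ∧
      ∀ n (c : Fin n → γ), μ (cyl n c) = ENNReal.ofReal (p n c) := by
  set T := codeT p hp0 hp1 hp2 with hT
  have hTm : Measurable T := measurable_codeT p hp0 hp1 hp2
  refine ⟨(volume.restrict (Set.Ico (0:ℝ) 1)).map T, ⟨?_⟩, fun n c => ?_⟩
  · rw [Measure.map_apply hTm MeasurableSet.univ]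
    simp [Real.volume_Ico]
  · rw [Measure.map_apply hTm (measurableSet_cyl n c),
      Measure.restrict_apply (hTm (measurableSet_cyl n c))]
    have hset : T ⁻¹' cyl n c ∩ Set.Ico (0:ℝ) 1 =
        Set.Ico (lo p n c) (lo p n c + p n c) := by
      ext x
      simp only [Set.mem_inter_iff, Set.mem_preimage, Set.mem_Ico]
      constructor
      · rintro ⟨hxc, hx0, hx1⟩
        have htr := codeT_trunc p hp0 hp1 hp2 hx0 hx1 n
        have : dig p hp0 hp1 hp2 n x = c := by
          rw [← htr]; funext i; exact hxc i
        rw [← this]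
        exact dig_spec p hp0 hp1 hp2 hx0 hx1
      · intro hx
        have hcell := cell_in_unit p hp0 hp1 hp2 n c
        have hx0 : 0 ≤ x := le_trans hcell.1 hx.1
        have hx1 : x < 1 := lt_of_lt_of_le hx.2 hcell.2
        have hd : dig p hp0 hp1 hp2 n x = c :=
          (dig_eq_iff p hp0 hp1 hp2 hx0 hx1 c).2 hx
        refine ⟨?_, hx0, hx1⟩
        intro i
        have htr := codeT_trunc p hp0 hp1 hp2 hx0 hx1 n
        rw [← hd, ← htr]
    rw [hset, Real.volume_Ico]
    congr 1
    ring
end codemeasure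


section assembly

local notation "Ωb" => (ℕ → Bool)
local notation "γp" => (Bool × Bool)

/-- truncation -/
def truncb (N : ℕ) (ω : Ωb) : Fin N → Bool := fun i => ω (i : ℕ)

lemma measurable_truncb (N : ℕ) : Measurable (truncb N) :=
  measurable_pi_lambda _ fun i => measurable_pi_apply _

lemma integral_truncb (μ : Measure Ωb) [IsProbabilityMeasure μ] (N : ℕ)
    (g : (Fin N → Bool) → ℝ) :
    ∫ ω, g (truncb N ω) ∂μ = ∑ a : Fin N → Bool, (μ (cyl N a)).toReal * g a := by
  haveI : IsProbabilityMeasure (μ.map (truncb N)) :=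
    Measure.isProbabilityMeasure_map (measurable_truncb N).aemeasurable
  have h1 : ∫ ω, g (truncb N ω) ∂μ = ∫ x, g x ∂(μ.map (truncb N)) :=
    (integral_map (measurable_truncb N).aemeasurable
      (measurable_of_countable g).aestronglyMeasurable).symm
  rw [h1, integral_fintype (f := g) Integrable.of_finite]
  refine Finset.sum_congr rfl fun a _ => ?_
  rw [measureReal_def, Measure.map_apply (measurable_truncb N) (measurableSet_singleton a)]
  have : truncb N ⁻¹' {a} = cyl N a := by
    ext z; simp [truncb, cyl, funext_iff]
  rw [this, smul_eq_mul]

/-- monotone continuous integral inequality, general range -/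
lemma hyp_all (P Q : Measure Ωb) [IsProbabilityMeasure P] [IsProbabilityMeasure Q]
    (hyp : ∀ f : Ωb → ℝ, Continuous f → Monotone f →
      (∀ ω, f ω ∈ Set.Icc (0 : ℝ) 1) → ∫ ω, f ω ∂Q ≤ ∫ ω, f ω ∂P)
    (f : Ωb → ℝ) (hf : Continuous f) (hm : Monotone f) :
    ∫ ω, f ω ∂Q ≤ ∫ ω, f ω ∂P := by
  have hInt : ∀ (μ : Measure Ωb) [IsProbabilityMeasure μ], Integrable f μ := by
    intro μ _
    exact (BoundedContinuousFunction.mkOfCompact ⟨f, hf⟩).integrable μ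
  set m := f (fun _ => false) with hmdef
  set M := f (fun _ => true) with hMdef
  have hlow : ∀ ω, m ≤ f ω := fun ω => hm fun i => Bool.false_le (ω i)
  have hhigh : ∀ ω, f ω ≤ M := fun ω => hm fun i => Bool.le_true (ω i)
  rcases eq_or_lt_of_le (hlow (fun _ => true)) with hmM | hmM
  · have hconst : ∀ ω, f ω = m := fun ω => le_antisymm (hmM ▸ hhigh ω) (hlow ω)
    have h1 : ∀ (μ : Measure Ωb) [IsProbabilityMeasure μ], ∫ ω, f ω ∂μ = m := by
      intro μ _
      rw [show f = fun _ => m from funext hconst]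
      simp
    rw [h1 Q, h1 P]
  · have hpos : (0:ℝ) < M - m := by linarith
    set g : Ωb → ℝ := fun ω => (f ω - m) / (M - m) with hgdef
    have hgc : Continuous g := (hf.sub continuous_const).div_const _
    have hgm : Monotone g := fun a b hab => by
      have := hm hab
      simp only [hgdef]
      gcongr
    have hgr : ∀ ω, g ω ∈ Set.Icc (0:ℝ) 1 := fun ω =>
      ⟨div_nonneg (by linarith [hlow ω]) hpos.le,
        (div_le_one hpos).2 (by linarith [hhigh ω])⟩
    have hint : ∀ (μ : Measure Ωb) [IsProbabilityMeasure μ],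
        ∫ ω, g ω ∂μ = ((∫ ω, f ω ∂μ) - m) / (M - m) := by
      intro μ _
      simp only [hgdef]
      rw [integral_div, integral_sub (hInt μ) (integrable_const m), integral_const]
      simp
    have h2 := hyp g hgc hgm hgr
    rw [hint Q, hint P] at h2
    have h3 := mul_le_mul_of_nonneg_right h2 hpos.le
    rw [div_mul_cancel₀ _ (ne_of_gt hpos), div_mul_cancel₀ _ (ne_of_gt hpos)] at h3
    linarith

lemma hyp_fin (P Q : Measure Ωb) [IsProbabilityMeasure P] [IsProbabilityMeasure Q]
    (hyp : ∀ f : Ωb → ℝ, Continuous f → Monotone f →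
      (∀ ω, f ω ∈ Set.Icc (0 : ℝ) 1) → ∫ ω, f ω ∂Q ≤ ∫ ω, f ω ∂P)
    (N : ℕ) (g : (Fin N → Bool) → ℝ) (hg : Monotone g) :
    ∑ a : Fin N → Bool, (Q (cyl N a)).toReal * g a ≤
      ∑ a : Fin N → Bool, (P (cyl N a)).toReal * g a := by
  have hc : Continuous (fun ω : Ωb => g (truncb N ω)) := by
    have h1 : Continuous (truncb N) := continuous_pi fun i => continuous_apply _
    exact (continuous_of_discreteTopology (f := g)).comp h1
  have hmono : Monotone (fun ω : Ωb => g (truncb N ω)) :=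
    hg.comp fun a b hab i => hab (i : ℕ)
  have := hyp_all P Q hyp _ hc hmono
  rwa [integral_truncb Q N g, integral_truncb P N g] at this

/-- zip of two boolean strings -/
def zipf {N : ℕ} (a b : Fin N → Bool) : Fin N → γp := fun i => (a i, b i)

lemma res_snoc_iff {δ : Type*} {n N : ℕ} (h' : n + 1 ≤ N) (d : Fin N → δ)
    (c : Fin n → δ) (c' : δ) :
    res h' d = Fin.snoc c c' ↔
      (res (Nat.le_of_succ_le h') d = c ∧ d (Fin.castLE h' (Fin.last n)) = c') := by
  constructor
  · intro he
    refine ⟨funext fun i => ?_, ?_⟩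
    · have h1 := congrFun he (Fin.castSucc i)
      have h2 : Fin.castLE h' (Fin.castSucc i) = Fin.castLE (Nat.le_of_succ_le h') i :=
        Fin.ext rfl
      simpa [res, h2, Fin.snoc_castSucc] using h1
    · have h1 := congrFun he (Fin.last n)
      simpa [res, Fin.snoc_last] using h1
  · rintro ⟨hc, hc'⟩
    funext j
    refine Fin.lastCases ?_ (fun i => ?_) j
    · simpa [res, Fin.snoc_last] using hc'
    · have h2 : Fin.castLE h' (Fin.castSucc i) = Fin.castLE (Nat.le_of_succ_le h') i :=
        Fin.ext rfl
      have := congrFun hc i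
      simpa [res, h2, Fin.snoc_castSucc] using this

/-- the finite-level family obtained from the finite Strassen theorem -/
lemma exists_mem_phi (P Q : Measure Ωb) [IsProbabilityMeasure P] [IsProbabilityMeasure Q]
    (hyp : ∀ f : Ωb → ℝ, Continuous f → Monotone f →
      (∀ ω, f ω ∈ Set.Icc (0 : ℝ) 1) → ∫ ω, f ω ∂Q ≤ ∫ ω, f ω ∂P) (N : ℕ) :
    ∃ pp : ∀ n, (Fin n → γp) → ℝ,
      (∀ n c, pp n c ∈ Set.Icc (0:ℝ) 1) ∧
      (∀ n, n < N → ∀ c : Fin n → γp, pp n c = ∑ c' : γp, pp (n + 1) (Fin.snoc c c')) ∧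
      (∀ n, n ≤ N → ∀ c : Fin n → γp, (∃ i, ¬ ((c i).1 ≤ (c i).2)) → pp n c = 0) ∧
      (∀ n, n ≤ N → ∀ a : Fin n → Bool,
        ∑ b : Fin n → Bool, pp n (zipf a b) = (Q (cyl n a)).toReal) ∧
      (∀ n, n ≤ N → ∀ b : Fin n → Bool,
        ∑ a : Fin n → Bool, pp n (zipf a b) = (P (cyl n b)).toReal) := by
  classical
  set qv : (Fin N → Bool) → ℝ := fun a => (Q (cyl N a)).toReal with hqv
  set pv : (Fin N → Bool) → ℝ := fun a => (P (cyl N a)).toReal with hpv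
  obtain ⟨r, hr0, hrsupp, hrow, hcol⟩ := finStrassen qv pv
    (fun a => ENNReal.toReal_nonneg) (fun a => ENNReal.toReal_nonneg)
    (fun g hg => hyp_fin P Q hyp N g hg)
  set rr : (Fin N → γp) → ℝ := fun d => r (fun i => (d i).1, fun i => (d i).2) with hrr
  have hrr0 : ∀ d, 0 ≤ rr d := fun d => hr0 _
  -- total mass of rr is 1
  have htot : ∑ d : Fin N → γp, rr d = 1 := by
    have he : ∑ d : Fin N → γp, rr d = ∑ x : (Fin N → Bool) × (Fin N → Bool), r x :=
      Equiv.sum_comp (Equiv.arrowProdEquivProdArrow (Fin N) (fun _ => Bool) (fun _ => Bool)) r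
    rw [he, Fintype.sum_prod_type]
    have h2 : ∀ a : Fin N → Bool, ∑ b, r (a, b) = qv a := hrow
    rw [Finset.sum_congr rfl fun a _ => h2 a]
    rw [hqv, ← ENNReal.toReal_sum (fun a _ => measure_ne_top Q _), sum_measure_cyl Q N]
    rfl
  -- fiber sums of rr over the first component
  have hfib1 : ∀ a' : Fin N → Bool,
      ∑ d ∈ univ.filter (fun d : Fin N → γp => (fun i => (d i).1) = a'), rr d = qv a' := by
    intro a'
    rw [← hrow a']
    refine Finset.sum_nbij' (fun d => fun i => (d i).2) (fun b => fun i => (a' i, b i))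
      ?_ ?_ ?_ ?_ ?_
    · intro d hd; exact Finset.mem_univ _
    · intro b hb
      simp only [Finset.mem_filter, Finset.mem_univ, true_and]
    · intro d hd
      simp only [Finset.mem_filter, Finset.mem_univ, true_and] at hd
      funext i
      have hdi := congrFun hd i
      show (a' i, (d i).2) = d i
      rw [← hdi]
    · intro b hb; funext i; rfl
    · intro d hd
      simp only [Finset.mem_filter, Finset.mem_univ, true_and] at hd
      simp only [hrr]
      congr 1
      exact Prod.ext (by rw [hd]) rfl
  have hfib2 : ∀ b' : Fin N → Bool,
      ∑ d ∈ univ.filter (fun d : Fin N → γp => (fun i => (d i).2) = b'), rr d = pv b' := by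
    intro b'
    rw [← hcol b']
    refine Finset.sum_nbij' (fun d => fun i => (d i).1) (fun a => fun i => (a i, b' i))
      ?_ ?_ ?_ ?_ ?_
    · intro d hd; exact Finset.mem_univ _
    · intro a ha
      simp only [Finset.mem_filter, Finset.mem_univ, true_and]
    · intro d hd
      simp only [Finset.mem_filter, Finset.mem_univ, true_and] at hd
      funext i
      have hdi := congrFun hd i
      show ((d i).1, b' i) = d i
      rw [← hdi]
    · intro a ha; funext i; rfl
    · intro d hd
      simp only [Finset.mem_filter, Finset.mem_univ, true_and] at hd
      simp only [hrr]
      congr 1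
      exact Prod.ext rfl (by rw [hd])
  refine ⟨fun n c => if h : n ≤ N then
      ∑ d ∈ univ.filter (fun d : Fin N → γp => res h d = c), rr d else 0,
    ?_, ?_, ?_, ?_, ?_⟩
  · -- bounds
    intro n c
    dsimp only
    by_cases h : n ≤ N
    · rw [dif_pos h]
      constructor
      · exact Finset.sum_nonneg fun d _ => hrr0 d
      · calc ∑ d ∈ univ.filter (fun d : Fin N → γp => res h d = c), rr d
            ≤ ∑ d : Fin N → γp, rr d :=
              Finset.sum_le_sum_of_subset_of_nonneg (Finset.filter_subset _ _)
                (fun d _ _ => hrr0 d)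
          _ = 1 := htot
    · rw [dif_neg h]; exact ⟨le_refl 0, zero_le_one⟩
  · -- consistency
    intro n hn c
    dsimp only
    have h : n ≤ N := le_of_lt hn
    have h' : n + 1 ≤ N := hn
    rw [dif_pos h]
    have hrhs : ∀ c' : γp, (if h2 : n + 1 ≤ N then
        ∑ d ∈ univ.filter (fun d : Fin N → γp => res h2 d = Fin.snoc c c'), rr d else 0) =
        ∑ d ∈ (univ.filter (fun d : Fin N → γp => res h d = c)).filter
          (fun d => d (Fin.castLE h' (Fin.last n)) = c'), rr d := by
      intro c'
      rw [dif_pos h', Finset.filter_filter]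
      refine Finset.sum_congr ?_ fun _ _ => rfl
      ext d
      simp only [Finset.mem_filter, Finset.mem_univ, true_and]
      rw [res_snoc_iff h' d c c']
    rw [Finset.sum_congr rfl fun c' _ => hrhs c']
    exact (Finset.sum_fiberwise _ (fun d => d (Fin.castLE h' (Fin.last n))) rr).symm
  · -- support
    intro n hn c hbad
    dsimp only
    obtain ⟨i, hi⟩ := hbad
    rw [dif_pos hn]
    refine Finset.sum_eq_zero fun d hd => ?_
    simp only [Finset.mem_filter, Finset.mem_univ, true_and] at hd
    refine hrsupp _ (fun hle => hi ?_)
    have h1 := hle (Fin.castLE hn i)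
    dsimp only at h1
    have h2 : d (Fin.castLE hn i) = c i := congrFun hd i
    rwa [h2] at h1
  · -- first marginal
    intro n hn a
    dsimp only
    have key : ∀ b : Fin n → Bool, (if h2 : n ≤ N then
        ∑ d ∈ univ.filter (fun d : Fin N → γp => res h2 d = zipf a b), rr d else 0) =
        ∑ d ∈ (univ.filter (fun d : Fin N → γp =>
            (fun i : Fin n => (d (Fin.castLE hn i)).1) = a)).filter
          (fun d => (fun i : Fin n => (d (Fin.castLE hn i)).2) = b), rr d := by
      intro b
      rw [dif_pos hn, Finset.filter_filter]
      refine Finset.sum_congr ?_ fun _ _ => rfl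
      ext d
      simp only [Finset.mem_filter, Finset.mem_univ, true_and, res, zipf, funext_iff,
        Prod.ext_iff, forall_and]
    rw [Finset.sum_congr rfl fun b _ => key b]
    rw [Finset.sum_fiberwise _ (fun d => (fun i : Fin n => (d (Fin.castLE hn i)).2)) rr]
    -- now regroup by full first component
    rw [← Finset.sum_fiberwise (univ.filter (fun d : Fin N → γp =>
        (fun i : Fin n => (d (Fin.castLE hn i)).1) = a)) (fun d => (fun i => (d i).1)) rr]
    have inner : ∀ a' : Fin N → Bool,
        ∑ d ∈ ((univ.filter (fun d : Fin N → γp =>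
            (fun i : Fin n => (d (Fin.castLE hn i)).1) = a)).filter
          (fun d => (fun i => (d i).1) = a')), rr d =
        if res hn a' = a then qv a' else 0 := by
      intro a'
      by_cases hcase : res hn a' = a
      · rw [if_pos hcase]
        rw [← hfib1 a']
        congr 1
        ext d
        simp only [Finset.filter_filter, Finset.mem_filter, Finset.mem_univ, true_and]
        constructor
        · rintro ⟨h1, h2⟩; exact h2
        · intro h2
          refine ⟨?_, h2⟩
          funext i
          rw [← hcase]
          simp only [res]
          rw [← congrFun h2 (Fin.castLE hn i)]
      · rw [if_neg hcase]
        refine Finset.sum_eq_zero fun d hd => ?_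
        exfalso
        simp only [Finset.filter_filter, Finset.mem_filter, Finset.mem_univ, true_and] at hd
        refine hcase ?_
        funext i
        simp only [res]
        rw [← congrFun hd.2 (Fin.castLE hn i), congrFun hd.1 i]
    rw [Finset.sum_congr rfl fun a' _ => inner a']
    rw [← Finset.sum_filter]
    simp only [hqv]
    rw [← ENNReal.toReal_sum (fun a' _ => measure_ne_top Q _), ← measure_cyl_sum Q hn a]
  · -- second marginal
    intro n hn b
    dsimp only
    have key : ∀ a : Fin n → Bool, (if h2 : n ≤ N then
        ∑ d ∈ univ.filter (fun d : Fin N → γp => res h2 d = zipf a b), rr d else 0) =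
        ∑ d ∈ (univ.filter (fun d : Fin N → γp =>
            (fun i : Fin n => (d (Fin.castLE hn i)).2) = b)).filter
          (fun d => (fun i : Fin n => (d (Fin.castLE hn i)).1) = a), rr d := by
      intro a
      rw [dif_pos hn, Finset.filter_filter]
      refine Finset.sum_congr ?_ fun _ _ => rfl
      ext d
      simp only [Finset.mem_filter, Finset.mem_univ, true_and, res, zipf, funext_iff,
        Prod.ext_iff, forall_and]
      tauto
    rw [Finset.sum_congr rfl fun a _ => key a]
    rw [Finset.sum_fiberwise _ (fun d => (fun i : Fin n => (d (Fin.castLE hn i)).1)) rr]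
    rw [← Finset.sum_fiberwise (univ.filter (fun d : Fin N → γp =>
        (fun i : Fin n => (d (Fin.castLE hn i)).2) = b)) (fun d => (fun i => (d i).2)) rr]
    have inner : ∀ b' : Fin N → Bool,
        ∑ d ∈ ((univ.filter (fun d : Fin N → γp =>
            (fun i : Fin n => (d (Fin.castLE hn i)).2) = b)).filter
          (fun d => (fun i => (d i).2) = b')), rr d =
        if res hn b' = b then pv b' else 0 := by
      intro b'
      by_cases hcase : res hn b' = b
      · rw [if_pos hcase]
        rw [← hfib2 b']
        congr 1
        ext d
        simp only [Finset.filter_filter, Finset.mem_filter, Finset.mem_univ, true_and]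
        constructor
        · rintro ⟨h1, h2⟩; exact h2
        · intro h2
          refine ⟨?_, h2⟩
          funext i
          rw [← hcase]
          simp only [res]
          rw [← congrFun h2 (Fin.castLE hn i)]
      · rw [if_neg hcase]
        refine Finset.sum_eq_zero fun d hd => ?_
        exfalso
        simp only [Finset.filter_filter, Finset.mem_filter, Finset.mem_univ, true_and] at hd
        refine hcase ?_
        funext i
        simp only [res]
        rw [← congrFun hd.2 (Fin.castLE hn i), congrFun hd.1 i]
    rw [Finset.sum_congr rfl fun b' _ => inner b']
    rw [← Finset.sum_filter]
    simp only [hpv]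
    rw [← ENNReal.toReal_sum (fun b' _ => measure_ne_top P _), ← measure_cyl_sum P hn b]

/-- existence of a consistent coupling family -/
lemma exists_family (P Q : Measure Ωb) [IsProbabilityMeasure P] [IsProbabilityMeasure Q]
    (hyp : ∀ f : Ωb → ℝ, Continuous f → Monotone f →
      (∀ ω, f ω ∈ Set.Icc (0 : ℝ) 1) → ∫ ω, f ω ∂Q ≤ ∫ ω, f ω ∂P) :
    ∃ pp : ∀ n, (Fin n → γp) → ℝ,
      (∀ n c, 0 ≤ pp n c) ∧
      (∀ n (c : Fin n → γp), pp n c = ∑ c' : γp, pp (n + 1) (Fin.snoc c c')) ∧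
      (∀ n (c : Fin n → γp), (∃ i, ¬ ((c i).1 ≤ (c i).2)) → pp n c = 0) ∧
      (∀ n (a : Fin n → Bool), ∑ b : Fin n → Bool, pp n (zipf a b) = (Q (cyl n a)).toReal) ∧
      (∀ n (b : Fin n → Bool), ∑ a : Fin n → Bool, pp n (zipf a b) = (P (cyl n b)).toReal) := by
  classical
  set X := ∀ n, (Fin n → γp) → ℝ with hX
  set Φ : ℕ → Set X := fun N => {pp |
      (∀ n c, pp n c ∈ Set.Icc (0:ℝ) 1) ∧
      (∀ n, n < N → ∀ c : Fin n → γp, pp n c = ∑ c' : γp, pp (n + 1) (Fin.snoc c c')) ∧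
      (∀ n, n ≤ N → ∀ c : Fin n → γp, (∃ i, ¬ ((c i).1 ≤ (c i).2)) → pp n c = 0) ∧
      (∀ n, n ≤ N → ∀ a : Fin n → Bool,
        ∑ b : Fin n → Bool, pp n (zipf a b) = (Q (cyl n a)).toReal) ∧
      (∀ n, n ≤ N → ∀ b : Fin n → Bool,
        ∑ a : Fin n → Bool, pp n (zipf a b) = (P (cyl n b)).toReal)} with hΦ
  have hev : ∀ (n : ℕ) (c : Fin n → γp), Continuous (fun pp : X => pp n c) :=
    fun n c => (continuous_apply c).comp (continuous_apply n)
  have hne : ∀ N, (Φ N).Nonempty := by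
    intro N
    obtain ⟨pp, h1, h2, h3, h4, h5⟩ := exists_mem_phi P Q hyp N
    exact ⟨pp, h1, h2, h3, h4, h5⟩
  have hsub : ∀ N M, N ≤ M → Φ M ⊆ Φ N := by
    intro N M hNM pp hpp
    exact ⟨hpp.1, fun n hn => hpp.2.1 n (lt_of_lt_of_le hn hNM),
      fun n hn => hpp.2.2.1 n (le_trans hn hNM),
      fun n hn => hpp.2.2.2.1 n (le_trans hn hNM),
      fun n hn => hpp.2.2.2.2 n (le_trans hn hNM)⟩
  have hdir : Directed (· ⊇ ·) Φ := fun N M =>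
    ⟨max N M, hsub N _ (le_max_left _ _), hsub M _ (le_max_right _ _)⟩
  have hclosed : ∀ N, IsClosed (Φ N) := by
    intro N
    have heq : Φ N =
        (⋂ (n : ℕ), ⋂ (c : Fin n → γp), {pp : X | pp n c ∈ Set.Icc (0:ℝ) 1}) ∩
        ((⋂ (n : ℕ), ⋂ (_ : n < N), ⋂ (c : Fin n → γp),
            {pp : X | pp n c = ∑ c' : γp, pp (n + 1) (Fin.snoc c c')}) ∩
        ((⋂ (n : ℕ), ⋂ (_ : n ≤ N), ⋂ (c : Fin n → γp),
            ⋂ (_ : ∃ i, ¬ ((c i).1 ≤ (c i).2)), {pp : X | pp n c = 0}) ∩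
        ((⋂ (n : ℕ), ⋂ (_ : n ≤ N), ⋂ (a : Fin n → Bool),
            {pp : X | ∑ b : Fin n → Bool, pp n (zipf a b) = (Q (cyl n a)).toReal}) ∩
         (⋂ (n : ℕ), ⋂ (_ : n ≤ N), ⋂ (b : Fin n → Bool),
            {pp : X | ∑ a : Fin n → Bool, pp n (zipf a b) = (P (cyl n b)).toReal})))) := by
      ext pp
      simp only [hΦ, Set.mem_setOf_eq, Set.mem_inter_iff, Set.mem_iInter]
    rw [heq]
    refine (isClosed_iInter fun n => isClosed_iInter fun c =>
        isClosed_Icc.preimage (hev n c)).inter (IsClosed.inter ?_ (IsClosed.inter ?_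
          (IsClosed.inter ?_ ?_)))
    · exact isClosed_iInter fun n => isClosed_iInter fun _ => isClosed_iInter fun c =>
        isClosed_eq (hev n c) (continuous_finset_sum _ fun c' _ => hev (n+1) _)
    · exact isClosed_iInter fun n => isClosed_iInter fun _ => isClosed_iInter fun c =>
        isClosed_iInter fun _ => isClosed_eq (hev n c) continuous_const
    · exact isClosed_iInter fun n => isClosed_iInter fun _ => isClosed_iInter fun a =>
        isClosed_eq (continuous_finset_sum _ fun b _ => hev n _) continuous_const
    · exact isClosed_iInter fun n => isClosed_iInter fun _ => isClosed_iInter fun b =>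
        isClosed_eq (continuous_finset_sum _ fun a _ => hev n _) continuous_const
  have hbox : IsCompact (Set.univ.pi fun n : ℕ =>
      (Set.univ.pi fun _ : Fin n → γp => Set.Icc (0:ℝ) 1)) :=
    isCompact_univ_pi fun n => isCompact_univ_pi fun _ => isCompact_Icc
  have hcomp : ∀ N, IsCompact (Φ N) := by
    intro N
    refine hbox.of_isClosed_subset (hclosed N) ?_
    intro pp hpp
    simp only [Set.mem_univ_pi, Set.mem_pi]
    intro n _ c _
    exact hpp.1 n c
  obtain ⟨pp, hpp⟩ :=
    IsCompact.nonempty_iInter_of_directed_nonempty_isCompact_isClosed Φ hdir hne hcomp hclosed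
  simp only [Set.mem_iInter] at hpp
  refine ⟨pp, fun n c => (hpp 0).1 n c |>.1, fun n c => (hpp (n+1)).2.1 n (Nat.lt_succ_self n) c,
    fun n c => (hpp n).2.2.1 n le_rfl c, fun n a => (hpp n).2.2.2.1 n le_rfl a,
    fun n b => (hpp n).2.2.2.2 n le_rfl b⟩

end assembly
end StrassenAux

open MeasureTheory

/-- `Q` can be coupled below `P`: there is a probability measure `R` on `Ω × Ω`
with first marginal `Q`, second marginal `P`, concentrated on pairs `(ω, ω')`
with `ω ≤ ω'` coordinatewise. -/
def CoupledBelow (Q P : Measure (ℕ → Bool)) : Prop :=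
  ∃ R : Measure ((ℕ → Bool) × (ℕ → Bool)), IsProbabilityMeasure R ∧
    R.map Prod.fst = Q ∧ R.map Prod.snd = P ∧
    R {q : (ℕ → Bool) × (ℕ → Bool) | q.1 ≤ q.2} = 1

/-- Strassen's coupling criterion on Cantor space: `Q ≼ P` iff
`∫ f dQ ≤ ∫ f dP` for every continuous monotone `f : Ω → [0,1]`. -/
theorem strassen_coupling_criterion
    (P Q : Measure (ℕ → Bool)) [IsProbabilityMeasure P] [IsProbabilityMeasure Q] :
    CoupledBelow Q P ↔
      ∀ f : (ℕ → Bool) → ℝ, Continuous f → Monotone f →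
        (∀ ω, f ω ∈ Set.Icc (0 : ℝ) 1) →
        ∫ ω, f ω ∂Q ≤ ∫ ω, f ω ∂P := by
  classical
  constructor
  · -- forward: coupling implies integral inequality
    rintro ⟨R, hRprob, hRQ, hRP, hRle⟩ f hf hm hr
    have hSmeas : MeasurableSet {q : (ℕ → Bool) × (ℕ → Bool) | q.1 ≤ q.2} := by
      have heq : {q : (ℕ → Bool) × (ℕ → Bool) | q.1 ≤ q.2} =
          ⋂ i : ℕ, (fun q : (ℕ → Bool) × (ℕ → Bool) => (q.1 i, q.2 i)) ⁻¹'
            {x : Bool × Bool | x.1 ≤ x.2} := by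
        ext q
        simp only [Set.mem_setOf_eq, Set.mem_iInter, Set.mem_preimage, Pi.le_def]
      rw [heq]
      exact MeasurableSet.iInter fun i =>
        (((measurable_pi_apply i).comp measurable_fst).prodMk
          ((measurable_pi_apply i).comp measurable_snd)) ((Set.toFinite _).measurableSet)
    have hint1 : Integrable (fun x : (ℕ → Bool) × (ℕ → Bool) => f x.1) R :=
      (BoundedContinuousFunction.mkOfCompact ⟨fun x : (ℕ → Bool) × (ℕ → Bool) => f x.1,
        hf.comp continuous_fst⟩).integrable R
    have hint2 : Integrable (fun x : (ℕ → Bool) × (ℕ → Bool) => f x.2) R :=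
      (BoundedContinuousFunction.mkOfCompact ⟨fun x : (ℕ → Bool) × (ℕ → Bool) => f x.2,
        hf.comp continuous_snd⟩).integrable R
    have hcompl : R {q : (ℕ → Bool) × (ℕ → Bool) | q.1 ≤ q.2}ᶜ = 0 :=
      (prob_compl_eq_zero_iff hSmeas).mpr hRle
    have h_ae : ∀ᵐ x ∂ R, f x.1 ≤ f x.2 := by
      refine ae_iff.mpr (measure_mono_null ?_ hcompl)
      intro x hx
      simp only [Set.mem_setOf_eq] at hx ⊢
      exact fun hle => hx (hm hle)
    have h1 : ∫ ω, f ω ∂Q = ∫ x, f x.1 ∂ R := by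
      rw [← hRQ, integral_map measurable_fst.aemeasurable hf.aestronglyMeasurable]
    have h2 : ∫ ω, f ω ∂P = ∫ x, f x.2 ∂ R := by
      rw [← hRP, integral_map measurable_snd.aemeasurable hf.aestronglyMeasurable]
    rw [h1, h2]
    exact integral_mono_ae hint1 hint2 h_ae
  · -- reverse: integral inequality implies coupling
    intro hyp
    obtain ⟨pp, hpp0, hpp2, hppsupp, hppQ, hppP⟩ := exists_family P Q hyp
    have hcyl0 : (cyl 0 (fun i : Fin 0 => i.elim0) : Set (ℕ → Bool)) = Set.univ := by
      ext z; simp [cyl]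
    have hp1 : ∀ c : Fin 0 → Bool × Bool, pp 0 c = 1 := by
      intro c
      have h := hppQ 0 (fun i => i.elim0)
      rw [Fintype.sum_unique] at h
      rw [hcyl0, measure_univ] at h
      rw [ENNReal.toReal_one] at h
      rw [← h]
      congr 1
      exact Subsingleton.elim _ _
    obtain ⟨μ₂, hμ₂prob, hμ₂cyl⟩ := exists_coding_measure pp hpp0 hp1 hpp2
    set pairMap : (ℕ → Bool × Bool) → (ℕ → Bool) × (ℕ → Bool) :=
      fun z => (fun i => (z i).1, fun i => (z i).2) with hpairMap
    have hF1 : Measurable (fun z : ℕ → Bool × Bool => fun i => (z i).1) :=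
      measurable_pi_lambda _ fun i => measurable_fst.comp (measurable_pi_apply i)
    have hF2 : Measurable (fun z : ℕ → Bool × Bool => fun i => (z i).2) :=
      measurable_pi_lambda _ fun i => measurable_snd.comp (measurable_pi_apply i)
    have hpm : Measurable pairMap := hF1.prodMk hF2
    haveI : IsProbabilityMeasure (μ₂.map pairMap) := Measure.isProbabilityMeasure_map hpm.aemeasurable
    refine ⟨μ₂.map pairMap, inferInstance, ?_, ?_, ?_⟩
    · -- first marginal
      rw [Measure.map_map measurable_fst hpm]
      have hcomp : (Prod.fst ∘ pairMap) = fun z : ℕ → Bool × Bool => fun i => (z i).1 := rfl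
      rw [hcomp]
      haveI : IsProbabilityMeasure (μ₂.map (fun z : ℕ → Bool × Bool => fun i => (z i).1)) :=
        Measure.isProbabilityMeasure_map hF1.aemeasurable
      refine measure_ext_cyl _ _ fun n a => ?_
      rw [Measure.map_apply hF1 (measurableSet_cyl n a)]
      have hpre : (fun z : ℕ → Bool × Bool => fun i => (z i).1) ⁻¹' cyl n a =
          ⋃ b ∈ (Finset.univ : Finset (Fin n → Bool)), cyl n (zipf a b) := by
        ext z
        simp only [Set.mem_preimage, cyl, Set.mem_setOf_eq, Set.mem_iUnion,
          Finset.mem_univ, exists_true_left, true_and, exists_prop, zipf]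
        constructor
        · intro hz
          exact ⟨fun i => (z (i : ℕ)).2, fun i => Prod.ext (hz i) rfl⟩
        · rintro ⟨b, hz⟩ i
          rw [hz i]
      rw [hpre, measure_biUnion_finset ?_ (fun b _ => measurableSet_cyl n _)]
      · rw [Finset.sum_congr rfl fun b _ => hμ₂cyl n (zipf a b)]
        rw [← ENNReal.ofReal_sum_of_nonneg (fun b _ => hpp0 n _), hppQ n a,
          ENNReal.ofReal_toReal (measure_ne_top Q _)]
      · intro b _ b' _ hbb'
        refine cyl_disjoint fun he => hbb' ?_
        funext i
        have h2 := congr_arg Prod.snd (congrFun he i)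
        simpa [zipf] using h2
    · -- second marginal
      rw [Measure.map_map measurable_snd hpm]
      have hcomp : (Prod.snd ∘ pairMap) = fun z : ℕ → Bool × Bool => fun i => (z i).2 := rfl
      rw [hcomp]
      haveI : IsProbabilityMeasure (μ₂.map (fun z : ℕ → Bool × Bool => fun i => (z i).2)) :=
        Measure.isProbabilityMeasure_map hF2.aemeasurable
      refine measure_ext_cyl _ _ fun n b => ?_
      rw [Measure.map_apply hF2 (measurableSet_cyl n b)]
      have hpre : (fun z : ℕ → Bool × Bool => fun i => (z i).2) ⁻¹' cyl n b =
          ⋃ a ∈ (Finset.univ : Finset (Fin n → Bool)), cyl n (zipf a b) := by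
        ext z
        simp only [Set.mem_preimage, cyl, Set.mem_setOf_eq, Set.mem_iUnion,
          Finset.mem_univ, exists_true_left, true_and, exists_prop, zipf]
        constructor
        · intro hz
          exact ⟨fun i => (z (i : ℕ)).1, fun i => Prod.ext rfl (hz i)⟩
        · rintro ⟨a, hz⟩ i
          rw [hz i]
      rw [hpre, measure_biUnion_finset ?_ (fun a _ => measurableSet_cyl n _)]
      · rw [Finset.sum_congr rfl fun a _ => hμ₂cyl n (zipf a b)]
        rw [← ENNReal.ofReal_sum_of_nonneg (fun a _ => hpp0 n _), hppP n b,
          ENNReal.ofReal_toReal (measure_ne_top P _)]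
      · intro a _ a' _ haa'
        refine cyl_disjoint fun he => haa' ?_
        funext i
        have h2 := congr_arg Prod.fst (congrFun he i)
        simpa [zipf] using h2
    · -- concentration on the order relation
      have hSmeas : MeasurableSet {q : (ℕ → Bool) × (ℕ → Bool) | q.1 ≤ q.2} := by
        have heq : {q : (ℕ → Bool) × (ℕ → Bool) | q.1 ≤ q.2} =
            ⋂ i : ℕ, (fun q : (ℕ → Bool) × (ℕ → Bool) => (q.1 i, q.2 i)) ⁻¹'
              {x : Bool × Bool | x.1 ≤ x.2} := by
          ext q
          simp only [Set.mem_setOf_eq, Set.mem_iInter, Set.mem_preimage, Pi.le_def]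
        rw [heq]
        exact MeasurableSet.iInter fun i =>
          (((measurable_pi_apply i).comp measurable_fst).prodMk
            ((measurable_pi_apply i).comp measurable_snd)) ((Set.toFinite _).measurableSet)
      rw [Measure.map_apply hpm hSmeas]
      have hpre : pairMap ⁻¹' {q : (ℕ → Bool) × (ℕ → Bool) | q.1 ≤ q.2} =
          {z : ℕ → Bool × Bool | ∀ i : ℕ, (z i).1 ≤ (z i).2} := by
        ext z
        simp only [Set.mem_preimage, Set.mem_setOf_eq, hpairMap, Pi.le_def]
      rw [hpre]
      have hS2meas : MeasurableSet {z : ℕ → Bool × Bool | ∀ i : ℕ, (z i).1 ≤ (z i).2} := by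
        rw [← hpre]
        exact hpm hSmeas
      refine (prob_compl_eq_zero_iff hS2meas).mp ?_
      have hcompl : {z : ℕ → Bool × Bool | ∀ i : ℕ, (z i).1 ≤ (z i).2}ᶜ =
          ⋃ i : ℕ, ⋃ c ∈ (Finset.univ.filter (fun c : Fin (i+1) → Bool × Bool =>
            ¬ ((c (Fin.last i)).1 ≤ (c (Fin.last i)).2))), cyl (i+1) c := by
        ext z
        simp only [Set.mem_compl_iff, Set.mem_setOf_eq, not_forall, Set.mem_iUnion,
          Finset.mem_filter, Finset.mem_univ, true_and, exists_prop]
        constructor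
        · rintro ⟨i, hi⟩
          refine ⟨i, fun j => z (j : ℕ), ?_, fun j => rfl⟩
          simpa [Fin.val_last] using hi
        · rintro ⟨i, c, hc, hz⟩
          refine ⟨i, ?_⟩
          have := hz (Fin.last i)
          simp only [Fin.val_last] at this
          rwa [this]
      rw [hcompl]
      refine measure_iUnion_null fun i => ?_
      refine measure_biUnion_null_iff (Finset.countable_toSet _) |>.mpr fun c hc => ?_
      simp only [Finset.coe_filter, Set.mem_setOf_eq, Finset.mem_univ, true_and] at hc
      rw [hμ₂cyl (i+1) c]
      rw [hppsupp (i+1) c ⟨Fin.last i, hc⟩]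
      simp
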